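/- arXiv:1903.01615 — 5 statements merged into one kernel-verified Lean document; each statement's English description precedes it below -/
import Mathlib

section
/- Let λ ∈ ℂ with λ ≠ e_x, and suppose Ψ : ℤ → ℂ³ satisfies the eigenvalue equations λΨ^L(x) = a_{x+1}Ψ^L(x+1) + b_{x+1}Ψ^O(x+1) + c_{x+1}Ψ^R(x+1), λΨ^O(x) = d_xΨ^L(x) + e_xΨ^O(x) + f_xΨ^R(x), λΨ^R(x) = g_{x-1}Ψ^L(x-1) + h_{x-1}Ψ^O(x-1) + i_{x-1}Ψ^R(x-1). If f_x ≠ 0 and hₓfₓ + iₓ(λ − eₓ) ≠ 0, then Ψ^O(x) = −(a_{x+1}(f_xg_x − i_xd_x))/(λ(h_xf_x + i_x(λ−e_x))) Ψ^L(x+1) − (b_{x+1}(f_xg_x − i_xd_x))/(λ(h_xf_x + i_x(λ−e_x))) Ψ^O(x+1) + (λ²f_x − c_{x+1}(f_xg_x − i_xd_x))/(λ(h_xf_x + i_x(λ−e_x))) Ψ^R(x+1), where λ ≠ 0. -/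
theorem three_state_qw_middle_component_backward
    (a b c d e f g h i : ℤ → ℂ) (lam : ℂ)
    (ΨL ΨO ΨR : ℤ → ℂ)
    (hL : ∀ x : ℤ, lam * ΨL x =
      a (x+1) * ΨL (x+1) + b (x+1) * ΨO (x+1) + c (x+1) * ΨR (x+1))
    (hO : ∀ x : ℤ, lam * ΨO x = d x * ΨL x + e x * ΨO x + f x * ΨR x)
    (hR : ∀ x : ℤ, lam * ΨR x =
      g (x-1) * ΨL (x-1) + h (x-1) * ΨO (x-1) + i (x-1) * ΨR (x-1))
    (x : ℤ) (hlam : lam ≠ 0) (hle : lam ≠ e x) (hf : f x ≠ 0)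
    (hden : h x * f x + i x * (lam - e x) ≠ 0) :
    ΨO x =
      -(a (x+1) * (f x * g x - i x * d x)) / (lam * (h x * f x + i x * (lam - e x))) * ΨL (x+1)
      - b (x+1) * (f x * g x - i x * d x) / (lam * (h x * f x + i x * (lam - e x))) * ΨO (x+1)
      + (lam ^ 2 * f x - c (x+1) * (f x * g x - i x * d x)) /
          (lam * (h x * f x + i x * (lam - e x))) * ΨR (x+1) := by
  have h2 := hR (x+1)
  simp only [add_sub_cancel_right] at h2
  have key : lam * (h x * f x + i x * (lam - e x)) * ΨO x =
      -(a (x+1) * (f x * g x - i x * d x)) * ΨL (x+1)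
      - b (x+1) * (f x * g x - i x * d x) * ΨO (x+1)
      + (lam ^ 2 * f x - c (x+1) * (f x * g x - i x * d x)) * ΨR (x+1) := by
    linear_combination (-(lam * f x)) * h2 + (lam * i x) * hO x
      - (f x * g x - i x * d x) * hL x
  have hne : lam * (h x * f x + i x * (lam - e x)) ≠ 0 := mul_ne_zero hlam hden
  rw [show ΨO x = (-(a (x+1) * (f x * g x - i x * d x)) * ΨL (x+1)
      - b (x+1) * (f x * g x - i x * d x) * ΨO (x+1)
      + (lam ^ 2 * f x - c (x+1) * (f x * g x - i x * d x)) * ΨR (x+1))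
      / (lam * (h x * f x + i x * (lam - e x))) from by
    rw [eq_div_iff hne]; linear_combination key]
  ring
end

section
/- Under the same hypotheses (eigenvalue equations for the three-state QW, λ ≠ 0, h_xf_x + i_x(λ−e_x) ≠ 0), the right component satisfies Ψ^R(x) = −(a_{x+1}(h_xd_x + g_x(λ−e_x)))/(λ(h_xf_x + i_x(λ−e_x))) Ψ^L(x+1) − (b_{x+1}(h_xd_x + g_x(λ−e_x)))/(λ(h_xf_x + i_x(λ−e_x))) Ψ^O(x+1) + ((λ−e_x)(λ² − g_xc_{x+1}) − h_xc_{x+1}d_x)/(λ(h_xf_x + i_x(λ−e_x))) Ψ^R(x+1). -/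
theorem three_state_qw_right_component_backward
    (a b c d e f g h i : ℤ → ℂ) (lam : ℂ)
    (ΨL ΨO ΨR : ℤ → ℂ)
    (hL : ∀ x : ℤ, lam * ΨL x =
      a (x+1) * ΨL (x+1) + b (x+1) * ΨO (x+1) + c (x+1) * ΨR (x+1))
    (hO : ∀ x : ℤ, lam * ΨO x = d x * ΨL x + e x * ΨO x + f x * ΨR x)
    (hR : ∀ x : ℤ, lam * ΨR x =
      g (x-1) * ΨL (x-1) + h (x-1) * ΨO (x-1) + i (x-1) * ΨR (x-1))
    (x : ℤ) (hlam : lam ≠ 0)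
    (hden : h x * f x + i x * (lam - e x) ≠ 0) :
    ΨR x =
      -(a (x+1) * (h x * d x + g x * (lam - e x))) /
          (lam * (h x * f x + i x * (lam - e x))) * ΨL (x+1)
      - b (x+1) * (h x * d x + g x * (lam - e x)) /
          (lam * (h x * f x + i x * (lam - e x))) * ΨO (x+1)
      + ((lam - e x) * (lam ^ 2 - g x * c (x+1)) - h x * c (x+1) * d x) /
          (lam * (h x * f x + i x * (lam - e x))) * ΨR (x+1) := by
  have h1 := hL x
  have h2 := hO x
  have h3 := hR (x+1)
  simp only [add_sub_cancel_right] at h3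
  have hD : lam * (h x * f x + i x * (lam - e x)) ≠ 0 := mul_ne_zero hlam hden
  rw [div_mul_eq_mul_div, div_mul_eq_mul_div, div_mul_eq_mul_div, div_sub_div_same,
    ← add_div, eq_div_iff hD]
  linear_combination -((lam * (lam - e x)) * h3 + (lam * h x) * h2 +
    (h x * d x + g x * (lam - e x)) * h1)
end

section
/- Under the eigenvalue equations for the three-state QW, if λ ≠ 0 and a_x(λ−e_x) + b_xd_x ≠ 0, then Ψ^L(x) = ((λ−e_x)(λ² − g_{x-1}c_x) − g_{x-1}b_xf_x)/(λ(a_x(λ−e_x) + b_xd_x)) Ψ^L(x−1) − (h_{x-1}(b_xf_x + c_x(λ−e_x)))/(λ(a_x(λ−e_x) + b_xd_x)) Ψ^O(x−1) − (i_{x-1}(b_xf_x + c_x(λ−e_x)))/(λ(a_x(λ−e_x) + b_xd_x)) Ψ^R(x−1). -/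
theorem three_state_qw_left_component_forward
    (a b c d e f g h i : ℤ → ℂ) (lam : ℂ)
    (ΨL ΨO ΨR : ℤ → ℂ)
    (hL : ∀ x : ℤ, lam * ΨL x =
      a (x+1) * ΨL (x+1) + b (x+1) * ΨO (x+1) + c (x+1) * ΨR (x+1))
    (hO : ∀ x : ℤ, lam * ΨO x = d x * ΨL x + e x * ΨO x + f x * ΨR x)
    (hR : ∀ x : ℤ, lam * ΨR x =
      g (x-1) * ΨL (x-1) + h (x-1) * ΨO (x-1) + i (x-1) * ΨR (x-1))
    (x : ℤ) (hlam : lam ≠ 0)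
    (hden : a x * (lam - e x) + b x * d x ≠ 0) :
    ΨL x =
      ((lam - e x) * (lam ^ 2 - g (x-1) * c x) - g (x-1) * b x * f x) /
          (lam * (a x * (lam - e x) + b x * d x)) * ΨL (x-1)
      - h (x-1) * (b x * f x + c x * (lam - e x)) /
          (lam * (a x * (lam - e x) + b x * d x)) * ΨO (x-1)
      - i (x-1) * (b x * f x + c x * (lam - e x)) /
          (lam * (a x * (lam - e x) + b x * d x)) * ΨR (x-1) := by
  have h1 := hL (x-1)
  simp only [sub_add_cancel] at h1
  have h2 := hO x
  have h3 := hR x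
  have hden' : (lam - e x) * a x + b x * d x ≠ 0 := by rwa [mul_comm (lam - e x)]
  field_simp
  linear_combination (-(lam * (lam - e x))) * h1 + (-(lam * b x)) * h2 -
    (b x * f x + c x * (lam - e x)) * h3
end

section
/- Suppose Ψ : ℤ → ℂ³ satisfies the three componentwise eigenvalue equations of a three-state QW with eigenvalue λ ≠ 0, and suppose for all y ≥ 1 the denominators a_y(λ−e_y)+b_yd_y are nonzero. Then for all x ≥ 1, Ψ(x) = T⁺_x T⁺_{x−1} ⋯ T⁺_1 Ψ(0), where T⁺_y is the 3×3 transfer matrix with rows: row 1 = (((λ−e_y)(λ²−g_{y−1}c_y)−g_{y−1}b_yf_y)/D, −h_{y−1}(b_yf_y+c_y(λ−e_y))/D, −i_{y−1}(b_yf_y+c_y(λ−e_y))/D), row 2 = ((λ²d_y+g_{y−1}(a_yf_y−c_yd_y))/D, h_{y−1}(a_yf_y−c_yd_y)/D, i_{y−1}(a_yf_y−c_yd_y)/D), row 3 = (g_{y−1}/λ, h_{y−1}/λ, i_{y−1}/λ), with D = λ(a_y(λ−e_y)+b_yd_y). -/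
/-- Forward transfer matrix `T⁺_y` of the three-state QW with coin entries
`a,…,i` and eigenvalue `lam`, with denominator `D = λ(a_y(λ−e_y)+b_yd_y)`. -/
noncomputable def transferPlus (a b c d e f g h i : ℤ → ℂ) (lam : ℂ) (y : ℤ) :
    Matrix (Fin 3) (Fin 3) ℂ :=
  !![((lam - e y) * (lam ^ 2 - g (y-1) * c y) - g (y-1) * b y * f y) /
        (lam * (a y * (lam - e y) + b y * d y)),
     -(h (y-1) * (b y * f y + c y * (lam - e y))) /
        (lam * (a y * (lam - e y) + b y * d y)),
     -(i (y-1) * (b y * f y + c y * (lam - e y))) /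
        (lam * (a y * (lam - e y) + b y * d y));
     (lam ^ 2 * d y + g (y-1) * (a y * f y - c y * d y)) /
        (lam * (a y * (lam - e y) + b y * d y)),
     h (y-1) * (a y * f y - c y * d y) / (lam * (a y * (lam - e y) + b y * d y)),
     i (y-1) * (a y * f y - c y * d y) / (lam * (a y * (lam - e y) + b y * d y));
     g (y-1) / lam, h (y-1) / lam, i (y-1) / lam]

/-- The ordered product `T⁺_n ⋯ T⁺_1` (empty product for `n = 0`). -/
noncomputable def transferProd (a b c d e f g h i : ℤ → ℂ) (lam : ℂ) :
    ℕ → Matrix (Fin 3) (Fin 3) ℂ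
  | 0 => 1
  | n + 1 => transferPlus a b c d e f g h i lam ((n : ℤ) + 1) *
      transferProd a b c d e f g h i lam n

lemma transfer_step (a b c d e f g h i : ℤ → ℂ) (lam : ℂ) (hlam : lam ≠ 0)
    (Ψ : ℤ → Fin 3 → ℂ)
    (hL : ∀ x : ℤ, lam * Ψ x 0 =
      a (x+1) * Ψ (x+1) 0 + b (x+1) * Ψ (x+1) 1 + c (x+1) * Ψ (x+1) 2)
    (hO : ∀ x : ℤ, lam * Ψ x 1 = d x * Ψ x 0 + e x * Ψ x 1 + f x * Ψ x 2)
    (hR : ∀ x : ℤ, lam * Ψ x 2 =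
      g (x-1) * Ψ (x-1) 0 + h (x-1) * Ψ (x-1) 1 + i (x-1) * Ψ (x-1) 2)
    (y : ℤ) (hΔ : a y * (lam - e y) + b y * d y ≠ 0) :
    Ψ y = (transferPlus a b c d e f g h i lam y).mulVec (Ψ (y-1)) := by
  have hy : y - 1 + 1 = y := by ring
  have h1 := hL (y - 1)
  rw [hy] at h1
  have h2 := hO y
  have h3 := hR y
  funext j
  fin_cases j <;>
    simp only [transferPlus, Matrix.mulVec, dotProduct, Matrix.of_apply, Fin.sum_univ_three,
      Matrix.cons_val', Matrix.cons_val_zero, Matrix.cons_val_one, Matrix.head_cons,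
      Matrix.empty_val', Matrix.cons_val_fin_one, Matrix.head_fin_const,
      Matrix.cons_val_two, Matrix.tail_cons, Fin.mk_zero, Fin.mk_one, Fin.isValue]
  · have hΔ' : (lam - e y) * a y + b y * d y ≠ 0 := by rw [mul_comm]; exact hΔ
    field_simp
    linear_combination (-(lam * (lam - e y))) * h1 + (-(lam * b y)) * h2 +
      (-(c y * (lam - e y) + b y * f y)) * h3
  · have hΔ' : a y * (lam - e y) + d y * b y ≠ 0 := by rw [mul_comm (d y)]; exact hΔ
    field_simp
    linear_combination (-(lam * d y)) * h1 + (lam * a y) * h2 +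
      (a y * f y - c y * d y) * h3
  · show Ψ y 2 = _
    simp only [Fin.reduceFinMk, Matrix.cons_val]
    field_simp
    linear_combination h3

theorem three_state_qw_transfer_matrix_product
    (a b c d e f g h i : ℤ → ℂ) (lam : ℂ) (hlam : lam ≠ 0)
    (Ψ : ℤ → Fin 3 → ℂ)
    (hL : ∀ x : ℤ, lam * Ψ x 0 =
      a (x+1) * Ψ (x+1) 0 + b (x+1) * Ψ (x+1) 1 + c (x+1) * Ψ (x+1) 2)
    (hO : ∀ x : ℤ, lam * Ψ x 1 = d x * Ψ x 0 + e x * Ψ x 1 + f x * Ψ x 2)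
    (hR : ∀ x : ℤ, lam * Ψ x 2 =
      g (x-1) * Ψ (x-1) 0 + h (x-1) * Ψ (x-1) 1 + i (x-1) * Ψ (x-1) 2)
    (hden : ∀ y : ℤ, 1 ≤ y → a y * (lam - e y) + b y * d y ≠ 0) :
    ∀ n : ℕ, 1 ≤ n →
      Ψ (n : ℤ) = (transferProd a b c d e f g h i lam n).mulVec (Ψ 0) := by
  have key : ∀ n : ℕ, Ψ (n : ℤ) = (transferProd a b c d e f g h i lam n).mulVec (Ψ 0) := by
    intro n
    induction n with
    | zero => simp [transferProd, Matrix.one_mulVec]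
    | succ n ih =>
        have hΔ : a ((n : ℤ) + 1) * (lam - e ((n : ℤ) + 1)) + b ((n : ℤ) + 1) * d ((n : ℤ) + 1) ≠ 0 :=
          hden _ (by omega)
        have step := transfer_step a b c d e f g h i lam hlam Ψ hL hO hR ((n : ℤ) + 1) hΔ
        have hcast : ((n + 1 : ℕ) : ℤ) = (n : ℤ) + 1 := by push_cast; ring
        rw [hcast, step]
        have : (n : ℤ) + 1 - 1 = (n : ℤ) := by ring
        rw [this, ih, transferProd, Matrix.mulVec_mulVec]
  intro n _
  exact key n
end

section
/- Let T⁺ be the Fourier-walk forward transfer matrix at eigenvalue λ = i, ω = e^{2πi/3}: T⁺ = [[ω,0,0],[(−ω−5)/(3ω),(1−ω)/3,(1−ω)/(3ω)],[1/(ω(1−ω)),ω/(1−ω),1/(1−ω)]]. Then (T⁺)³ applied to the vector v = (α, 0, −αω^{−2}) returns v, i.e. v is a fixed point of (T⁺)³ for every α ∈ ℂ. -/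
noncomputable def ω3 : ℂ := Complex.exp (2 * Real.pi * Complex.I / 3)

/-- Forward transfer matrix of the Fourier walk at eigenvalue λ = i. -/
noncomputable def fourierTransfer : Matrix (Fin 3) (Fin 3) ℂ :=
  !![ω3, 0, 0;
     (-ω3 - 5) / (3 * ω3), (1 - ω3) / 3, (1 - ω3) / (3 * ω3);
     1 / (ω3 * (1 - ω3)), ω3 / (1 - ω3), 1 / (1 - ω3)]

lemma hprim : IsPrimitiveRoot ω3 3 := Complex.isPrimitiveRoot_exp 3 (by norm_num)
lemma hne1 : ω3 ≠ 1 := hprim.ne_one (by norm_num)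
lemma hne0 : ω3 ≠ 0 := hprim.ne_zero (by norm_num)
lemma hsum : ω3 ^ 2 + ω3 + 1 = 0 := by
  have h : (ω3 - 1) * (ω3 ^ 2 + ω3 + 1) = 0 := by linear_combination hprim.pow_eq_one
  rcases mul_eq_zero.mp h with h | h
  · exact absurd (sub_eq_zero.mp h) hne1
  · exact h

lemma step1 (α : ℂ) : fourierTransfer.mulVec ![α, 0, -α * (ω3 ^ 2)⁻¹]
    = ![α * ω3, α * (ω3 - ω3^2), -α * ω3] := by
  have h0 := hne0
  have h1 : (1:ℂ) - ω3 ≠ 0 := sub_ne_zero.mpr (Ne.symm hne1)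
  have hs := hsum
  funext i
  fin_cases i
  · simp [fourierTransfer, Matrix.mulVec, dotProduct, Fin.sum_univ_three]
    ring
  · simp [fourierTransfer, Matrix.mulVec, dotProduct, Fin.sum_univ_three]
    field_simp
    linear_combination (α * (-1 + 2*ω3 - 6*ω3^2 + 3*ω3^3)) * hs
  · simp [fourierTransfer, Matrix.mulVec, dotProduct, Fin.sum_univ_three]
    field_simp
    linear_combination (α * (-1 + 2*ω3 - ω3^2)) * hs

lemma step2 (α : ℂ) : fourierTransfer.mulVec ![α * ω3, α * (ω3 - ω3^2), -α * ω3]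
    = ![α * ω3^2, α * (ω3 - 1), -α * ω3] := by
  have h0 := hne0
  have h1 : (1:ℂ) - ω3 ≠ 0 := sub_ne_zero.mpr (Ne.symm hne1)
  have hs := hsum
  funext i
  fin_cases i
  · simp [fourierTransfer, Matrix.mulVec, dotProduct, Fin.sum_univ_three]
    ring
  · simp [fourierTransfer, Matrix.mulVec, dotProduct, Fin.sum_univ_three]
    field_simp
    linear_combination (α * (-3 + ω3)) * hs
  · simp [fourierTransfer, Matrix.mulVec, dotProduct, Fin.sum_univ_three]
    field_simp
    linear_combination (α * (1 - ω3)) * hs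

lemma step3 (α : ℂ) : fourierTransfer.mulVec ![α * ω3^2, α * (ω3 - 1), -α * ω3]
    = ![α, 0, -α * (ω3 ^ 2)⁻¹] := by
  have h0 := hne0
  have h1 : (1:ℂ) - ω3 ≠ 0 := sub_ne_zero.mpr (Ne.symm hne1)
  have hs := hsum
  funext i
  fin_cases i
  · simp [fourierTransfer, Matrix.mulVec, dotProduct, Fin.sum_univ_three]
    linear_combination (α * (-1 + ω3)) * hs
  · simp [fourierTransfer, Matrix.mulVec, dotProduct, Fin.sum_univ_three]
    field_simp
    linear_combination (α * (-2)) * hs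
  · simp [fourierTransfer, Matrix.mulVec, dotProduct, Fin.sum_univ_three]
    field_simp
    linear_combination (α * (1 - 2*ω3 + ω3^2)) * hs

theorem fourier_transfer_cube_fixes_vector (α : ℂ) :
    (fourierTransfer ^ 3).mulVec ![α, 0, -α * (ω3 ^ 2)⁻¹]
      = ![α, 0, -α * (ω3 ^ 2)⁻¹] := by
  have h3 : fourierTransfer ^ 3 = fourierTransfer * (fourierTransfer * fourierTransfer) := by
    rw [pow_succ, pow_two, mul_assoc]
  rw [h3, ← Matrix.mulVec_mulVec, ← Matrix.mulVec_mulVec, step1, step2, step3]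
end
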